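/- For m, n ≥ 2 with mn > 4, the spins of types 1×2/2×1 and 2×2 generate the index-2 subgroup Spin^a_{m×n} = {(α, v) ∈ Spin_{m×n} : wt(v) ≡ 0 mod 2} of elements with even Hamming-weight orientation vector. -/
import Mathlib



/-- Positions on an `m × n` board, as (row, column) pairs. -/
abbrev Pos (m n : ℕ) := Fin m × Fin n

/-- An element `(α, u)` of the group `Spin_{m×n} = ℤ/2ℤ ≀ S_{mn}`: a permutation `α` of
the positions together with an orientation-flip vector `u ∈ (ℤ/2ℤ)^{mn}`. -/
@[ext] structure SpinElt (m n : ℕ) where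
  perm : Equiv.Perm (Pos m n)
  flip : Pos m n → ZMod 2

instance (m n : ℕ) : Group (SpinElt m n) where
  mul a b := ⟨a.perm * b.perm, fun p => a.flip p + b.flip (a.perm⁻¹ p)⟩
  one := ⟨1, 0⟩
  inv a := ⟨a.perm⁻¹, fun p => a.flip (a.perm p)⟩
  div a b := ⟨a.perm * b.perm⁻¹, fun p => a.flip p + b.flip (b.perm (a.perm⁻¹ p))⟩
  div_eq_mul_inv _ _ := rfl
  mul_assoc a b c := by
    refine SpinElt.ext (mul_assoc ..) (funext fun p => ?_)
    show a.flip p + b.flip (a.perm⁻¹ p) + c.flip ((a.perm * b.perm)⁻¹ p)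
        = a.flip p + (b.flip (a.perm⁻¹ p) + c.flip (b.perm⁻¹ (a.perm⁻¹ p)))
    simp [add_assoc]
  one_mul a := by
    refine SpinElt.ext (one_mul _) (funext fun p => ?_)
    show 0 + a.flip ((1 : Equiv.Perm (Pos m n))⁻¹ p) = a.flip p
    simp
  mul_one a := by
    refine SpinElt.ext (mul_one _) (funext fun p => ?_)
    show a.flip p + 0 = a.flip p
    simp
  inv_mul_cancel a := by
    refine SpinElt.ext (inv_mul_cancel _) (funext fun p => ?_)
    show a.flip (a.perm p) + a.flip ((a.perm⁻¹)⁻¹ p) = 0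
    simp [CharTwo.add_self_eq_zero]

@[simp] lemma SpinElt.mul_def {m n : ℕ} (a b : SpinElt m n) :
    a * b = ⟨a.perm * b.perm, fun p => a.flip p + b.flip (a.perm⁻¹ p)⟩ := rfl

@[simp] lemma SpinElt.one_def {m n : ℕ} : (1 : SpinElt m n) = ⟨1, 0⟩ := rfl

@[simp] lemma SpinElt.inv_def {m n : ℕ} (a : SpinElt m n) :
    a⁻¹ = ⟨a.perm⁻¹, fun p => a.flip (a.perm p)⟩ := rfl

/-- A rectangle on the `m × n` board, given by its top-left corner `(r1, c1)` and
bottom-right corner `(r2, c2)` (0-indexed). -/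
structure Rect (m n : ℕ) where
  r1 : ℕ
  c1 : ℕ
  r2 : ℕ
  c2 : ℕ
  hr : r1 ≤ r2
  hc : c1 ≤ c2
  hm : r2 < m
  hn : c2 < n

/-- Membership of a position in a rectangle. -/
def Rect.Mem {m n : ℕ} (R : Rect m n) (p : Pos m n) : Prop :=
  R.r1 ≤ p.1.val ∧ p.1.val ≤ R.r2 ∧ R.c1 ≤ p.2.val ∧ p.2.val ≤ R.c2

instance {m n : ℕ} (R : Rect m n) (p : Pos m n) : Decidable (R.Mem p) := by
  unfold Rect.Mem; infer_instance

/-- Rotation of the board by 180° about the center of `R`, fixing everything outside `R`. -/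
def Rect.rotFun {m n : ℕ} (R : Rect m n) (p : Pos m n) : Pos m n :=
  if h : R.Mem p then
    (⟨R.r1 + R.r2 - p.1.val, by obtain ⟨h1, h2, h3, h4⟩ := h; have := R.hm; omega⟩,
     ⟨R.c1 + R.c2 - p.2.val, by obtain ⟨h1, h2, h3, h4⟩ := h; have := R.hn; omega⟩)
  else p

lemma Rect.rotFun_fst {m n : ℕ} (R : Rect m n) (p : Pos m n) (h : R.Mem p) :
    ((R.rotFun p).1 : ℕ) = R.r1 + R.r2 - p.1.val := by
  simp only [Rect.rotFun, dif_pos h]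

lemma Rect.rotFun_snd {m n : ℕ} (R : Rect m n) (p : Pos m n) (h : R.Mem p) :
    ((R.rotFun p).2 : ℕ) = R.c1 + R.c2 - p.2.val := by
  simp only [Rect.rotFun, dif_pos h]

lemma Rect.rotFun_of_not_mem {m n : ℕ} (R : Rect m n) (p : Pos m n) (h : ¬ R.Mem p) :
    R.rotFun p = p := dif_neg h

lemma Rect.mem_rotFun {m n : ℕ} (R : Rect m n) (p : Pos m n) (h : R.Mem p) :
    R.Mem (R.rotFun p) := by
  obtain ⟨h1, h2, h3, h4⟩ := id h
  refine ⟨?_, ?_, ?_, ?_⟩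
  · rw [R.rotFun_fst p h]; omega
  · rw [R.rotFun_fst p h]; omega
  · rw [R.rotFun_snd p h]; omega
  · rw [R.rotFun_snd p h]; omega

lemma Rect.rotFun_involutive {m n : ℕ} (R : Rect m n) : Function.Involutive R.rotFun := by
  intro p
  by_cases h : R.Mem p
  · have h2 := R.mem_rotFun p h
    obtain ⟨h1', h2', h3', h4'⟩ := id h
    have e1 := R.rotFun_fst p h
    have e2 := R.rotFun_snd p h
    refine Prod.ext (Fin.ext ?_) (Fin.ext ?_)
    · rw [R.rotFun_fst _ h2, e1]; omega
    · rw [R.rotFun_snd _ h2, e2]; omega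
  · rw [R.rotFun_of_not_mem p h, R.rotFun_of_not_mem p h]

/-- The permutation of positions effected by the spin about `R`. -/
def Rect.spinPerm {m n : ℕ} (R : Rect m n) : Equiv.Perm (Pos m n) :=
  Function.Involutive.toPerm R.rotFun R.rotFun_involutive

/-- The spin about the rectangle `R`: it rotates the tiles in `R` by 180° and flips
the orientation of every tile in `R`. -/
def Rect.spin {m n : ℕ} (R : Rect m n) : SpinElt m n :=
  ⟨R.spinPerm, fun p => if R.Mem p then 1 else 0⟩

/-- An element of `Spin_{m×n}` is a spin if it is the spin about some rectangle. -/
def IsSpin {m n : ℕ} (x : SpinElt m n) : Prop := ∃ R : Rect m n, x = R.spin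

/-- The dimensions (number of rows, number of columns) of a rectangle. -/
def Rect.dims {m n : ℕ} (R : Rect m n) : ℕ × ℕ := (R.r2 + 1 - R.r1, R.c2 + 1 - R.c1)

/-- The Hamming weight of the orientation vector of an element of `Spin_{m×n}`. -/
def wt {m n : ℕ} (x : SpinElt m n) : ℕ := (Finset.univ.filter (fun p => x.flip p = 1)).card


namespace Stmt16Aux

section Aux

variable {m n : ℕ}

/-- The generating set of small spins. -/
def genSet (m n : ℕ) : Set (SpinElt m n) := {s : SpinElt m n | ∃ R : Rect m n, s = R.spin ∧
    (R.dims = (1, 2) ∨ R.dims = (2, 1) ∨ R.dims = (2, 2))}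

/-- Total flip parity. -/
def Phi {m n : ℕ} (x : SpinElt m n) : ZMod 2 := ∑ p, x.flip p

lemma Phi_mul (a b : SpinElt m n) : Phi (a * b) = Phi a + Phi b := by
  simp only [Phi, SpinElt.mul_def]
  rw [Finset.sum_add_distrib]
  congr 1
  exact Equiv.sum_comp (a.perm⁻¹) b.flip

lemma Phi_inv (a : SpinElt m n) : Phi a⁻¹ = Phi a := by
  simp only [Phi, SpinElt.inv_def]
  exact Equiv.sum_comp a.perm a.flip

lemma sum_eq_card (v : Pos m n → ZMod 2) :
    (∑ p, v p) = ((Finset.univ.filter (fun p => v p = 1)).card : ZMod 2) := by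
  rw [← Finset.sum_boole]
  apply Finset.sum_congr rfl
  intro p _
  rcases (show ∀ z : ZMod 2, z = 0 ∨ z = 1 by decide) (v p) with h | h <;> simp [h]

lemma Phi_eq_wt (x : SpinElt m n) : Phi x = (wt x : ZMod 2) := sum_eq_card x.flip

lemma even_wt_iff (x : SpinElt m n) : Even (wt x) ↔ Phi x = 0 := by
  rw [Phi_eq_wt, ZMod.natCast_eq_zero_iff]
  exact even_iff_two_dvd

lemma wt_spin (R : Rect m n) : wt R.spin = R.dims.1 * R.dims.2 := by
  have h1 : (Finset.univ.filter fun p : Pos m n =>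
      (if R.Mem p then (1 : ZMod 2) else 0) = 1) = Finset.univ.filter (fun p => R.Mem p) := by
    apply Finset.filter_congr
    intro p _
    by_cases h : R.Mem p <;> simp [h]
  show (Finset.univ.filter fun p : Pos m n =>
      (if R.Mem p then (1 : ZMod 2) else 0) = 1).card = _
  rw [h1,
    show R.dims.1 = (Finset.Icc R.r1 R.r2).card by simp [Rect.dims, Nat.card_Icc],
    show R.dims.2 = (Finset.Icc R.c1 R.c2).card by simp [Rect.dims, Nat.card_Icc],
    ← Finset.card_product]
  refine Finset.card_bij' (fun p _ => ((p.1 : ℕ), (p.2 : ℕ)))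
    (fun q hq => (⟨q.1, by
        simp only [Finset.mem_product, Finset.mem_Icc] at hq
        exact lt_of_le_of_lt hq.1.2 R.hm⟩,
      ⟨q.2, by
        simp only [Finset.mem_product, Finset.mem_Icc] at hq
        exact lt_of_le_of_lt hq.2.2 R.hn⟩)) ?_ ?_ ?_ ?_
  · intro p hp
    simp only [Finset.mem_filter] at hp
    obtain ⟨-, h1, h2, h3, h4⟩ := hp
    simp only [Finset.mem_product, Finset.mem_Icc]
    exact ⟨⟨h1, h2⟩, ⟨h3, h4⟩⟩
  · intro q hq
    simp only [Finset.mem_product, Finset.mem_Icc] at hq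
    simp only [Finset.mem_filter, Finset.mem_univ, true_and]
    exact ⟨hq.1.1, hq.1.2, hq.2.1, hq.2.2⟩
  · intro p _; rfl
  · intro q _; rfl

@[simp] lemma Rect.spinPerm_apply (R : Rect m n) (p : Pos m n) : R.spinPerm p = R.rotFun p := rfl

@[simp] lemma Rect.spinPerm_inv (R : Rect m n) : R.spinPerm⁻¹ = R.spinPerm :=
  Equiv.ext fun _ => rfl

lemma SpinElt.perm_mul (a b : SpinElt m n) : (a * b).perm = a.perm * b.perm := rfl

lemma SpinElt.flip_mul (a b : SpinElt m n) (p : Pos m n) :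
    (a * b).flip p = a.flip p + b.flip (a.perm⁻¹ p) := rfl

lemma SpinElt.perm_mk (e : Equiv.Perm (Pos m n)) (f : Pos m n → ZMod 2) :
    (⟨e, f⟩ : SpinElt m n).perm = e := rfl

lemma SpinElt.flip_mk (e : Equiv.Perm (Pos m n)) (f : Pos m n → ZMod 2) :
    (⟨e, f⟩ : SpinElt m n).flip = f := rfl

lemma Rect.perm_spin (R : Rect m n) : (R.spin).perm = R.spinPerm := rfl

lemma Rect.flip_spin (R : Rect m n) (p : Pos m n) :
    (R.spin).flip p = if R.Mem p then 1 else 0 := rfl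

/-- The projection onto the permutation part. -/
def permHom (m n : ℕ) : SpinElt m n →* Equiv.Perm (Pos m n) where
  toFun := SpinElt.perm
  map_one' := rfl
  map_mul' := fun _ _ => rfl

/-- The image of the generated subgroup in the symmetric group. -/
def Gam (m n : ℕ) : Subgroup (Equiv.Perm (Pos m n)) :=
  (Subgroup.closure (genSet m n)).map (permHom m n)

lemma spinPerm_1x2 {R : Rect m n} {i : Fin m} {j j' : Fin n}
    (hr1 : R.r1 = (i : ℕ)) (hr2 : R.r2 = (i : ℕ)) (hc1 : R.c1 = (j : ℕ))
    (hc2 : R.c2 = (j' : ℕ)) (hj : (j : ℕ) + 1 = (j' : ℕ)) :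
    R.spinPerm = Equiv.swap (i, j) (i, j') := by
  apply Equiv.ext
  intro p
  show R.rotFun p = _
  have hmemj : R.Mem (i, j) := by
    refine ⟨?_, ?_, ?_, ?_⟩ <;> first
      | (show R.r1 ≤ (i : ℕ); omega) | (show (i : ℕ) ≤ R.r2; omega)
      | (show R.c1 ≤ (j : ℕ); omega) | (show (j : ℕ) ≤ R.c2; omega)
  have hmemj' : R.Mem (i, j') := by
    refine ⟨?_, ?_, ?_, ?_⟩ <;> first
      | (show R.r1 ≤ (i : ℕ); omega) | (show (i : ℕ) ≤ R.r2; omega)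
      | (show R.c1 ≤ (j' : ℕ); omega) | (show (j' : ℕ) ≤ R.c2; omega)
  by_cases h1 : p = (i, j)
  · subst h1
    rw [Equiv.swap_apply_left]
    refine Prod.ext (Fin.ext ?_) (Fin.ext ?_)
    · rw [R.rotFun_fst _ hmemj]; show R.r1 + R.r2 - (i : ℕ) = (i : ℕ); omega
    · rw [R.rotFun_snd _ hmemj]; show R.c1 + R.c2 - (j : ℕ) = (j' : ℕ); omega
  · by_cases h2 : p = (i, j')
    · subst h2
      rw [Equiv.swap_apply_right]
      refine Prod.ext (Fin.ext ?_) (Fin.ext ?_)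
      · rw [R.rotFun_fst _ hmemj']; show R.r1 + R.r2 - (i : ℕ) = (i : ℕ); omega
      · rw [R.rotFun_snd _ hmemj']; show R.c1 + R.c2 - (j' : ℕ) = (j : ℕ); omega
    · rw [Equiv.swap_apply_of_ne_of_ne h1 h2]
      apply R.rotFun_of_not_mem
      intro hmem
      obtain ⟨a1, a2, a3, a4⟩ := hmem
      have hp1 : p.1 = i := Fin.ext (by omega)
      have : p.2.val = (j : ℕ) ∨ p.2.val = (j' : ℕ) := by omega
      rcases this with h | h
      · exact h1 (Prod.ext hp1 (Fin.ext h))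
      · exact h2 (Prod.ext hp1 (Fin.ext h))

lemma spinPerm_2x1 {R : Rect m n} {i i' : Fin m} {j : Fin n}
    (hr1 : R.r1 = (i : ℕ)) (hr2 : R.r2 = (i' : ℕ)) (hc1 : R.c1 = (j : ℕ))
    (hc2 : R.c2 = (j : ℕ)) (hi : (i : ℕ) + 1 = (i' : ℕ)) :
    R.spinPerm = Equiv.swap (i, j) (i', j) := by
  apply Equiv.ext
  intro p
  show R.rotFun p = _
  have hmemj : R.Mem (i, j) := by
    refine ⟨?_, ?_, ?_, ?_⟩ <;> first
      | (show R.r1 ≤ (i : ℕ); omega) | (show (i : ℕ) ≤ R.r2; omega)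
      | (show R.c1 ≤ (j : ℕ); omega) | (show (j : ℕ) ≤ R.c2; omega)
  have hmemj' : R.Mem (i', j) := by
    refine ⟨?_, ?_, ?_, ?_⟩ <;> first
      | (show R.r1 ≤ (i' : ℕ); omega) | (show (i' : ℕ) ≤ R.r2; omega)
      | (show R.c1 ≤ (j : ℕ); omega) | (show (j : ℕ) ≤ R.c2; omega)
  by_cases h1 : p = (i, j)
  · subst h1
    rw [Equiv.swap_apply_left]
    refine Prod.ext (Fin.ext ?_) (Fin.ext ?_)
    · rw [R.rotFun_fst _ hmemj]; show R.r1 + R.r2 - (i : ℕ) = (i' : ℕ); omega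
    · rw [R.rotFun_snd _ hmemj]; show R.c1 + R.c2 - (j : ℕ) = (j : ℕ); omega
  · by_cases h2 : p = (i', j)
    · subst h2
      rw [Equiv.swap_apply_right]
      refine Prod.ext (Fin.ext ?_) (Fin.ext ?_)
      · rw [R.rotFun_fst _ hmemj']; show R.r1 + R.r2 - (i' : ℕ) = (i : ℕ); omega
      · rw [R.rotFun_snd _ hmemj']; show R.c1 + R.c2 - (j : ℕ) = (j : ℕ); omega
    · rw [Equiv.swap_apply_of_ne_of_ne h1 h2]
      apply R.rotFun_of_not_mem
      intro hmem
      obtain ⟨a1, a2, a3, a4⟩ := hmem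
      have hp2 : p.2 = j := Fin.ext (by omega)
      have : p.1.val = (i : ℕ) ∨ p.1.val = (i' : ℕ) := by omega
      rcases this with h | h
      · exact h1 (Prod.ext (Fin.ext h) hp2)
      · exact h2 (Prod.ext (Fin.ext h) hp2)

lemma adjH_mem (i : Fin m) {j j' : Fin n} (hj : (j : ℕ) + 1 = (j' : ℕ)) :
    Equiv.swap (i, j) (i, j') ∈ Gam m n := by
  refine Subgroup.mem_map.mpr ⟨(⟨i, j, i, j', le_rfl, by omega, i.isLt, j'.isLt⟩ :
    Rect m n).spin, ?_, ?_⟩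
  · apply Subgroup.subset_closure
    refine ⟨_, rfl, Or.inl ?_⟩
    simp only [Rect.dims, Prod.mk.injEq]
    omega
  · exact spinPerm_1x2 rfl rfl rfl rfl hj

lemma adjV_mem {i i' : Fin m} (j : Fin n) (hi : (i : ℕ) + 1 = (i' : ℕ)) :
    Equiv.swap (i, j) (i', j) ∈ Gam m n := by
  refine Subgroup.mem_map.mpr ⟨(⟨i, j, i', j, by omega, le_rfl, i'.isLt, j.isLt⟩ :
    Rect m n).spin, ?_, ?_⟩
  · apply Subgroup.subset_closure
    refine ⟨_, rfl, Or.inr (Or.inl ?_)⟩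
    simp only [Rect.dims, Prod.mk.injEq]
    omega
  · exact spinPerm_2x1 rfl rfl rfl rfl hi

lemma rowSwap_aux (i : Fin m) : ∀ d (j j' : Fin n), (j : ℕ) + d = (j' : ℕ) → 0 < d →
    Equiv.swap (i, j) (i, j') ∈ Gam m n := by
  intro d
  induction d with
  | zero => omega
  | succ d ih =>
    intro j j' hd _
    rcases Nat.eq_zero_or_pos d with rfl | hdpos
    · exact adjH_mem i (by omega)
    · have hj'0 : 0 < (j' : ℕ) := by omega
      set jm : Fin n := ⟨(j' : ℕ) - 1, by omega⟩ with hjm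
      have h1 : Equiv.swap (i, jm) (i, j') ∈ Gam m n := adjH_mem i (by simp [hjm]; omega)
      have h2 : Equiv.swap (i, j) (i, jm) ∈ Gam m n := ih j jm (by simp [hjm]; omega) hdpos
      have hxy : (i, j) ≠ (i, jm) := by
        intro hc
        have := congrArg (fun q : Pos m n => (q.2 : ℕ)) hc
        simp [hjm] at this
        omega
      have hxz : (i, j) ≠ (i, j') := by
        intro hc
        have := congrArg (fun q : Pos m n => (q.2 : ℕ)) hc
        simp at this
        omega
      have key := Equiv.swap_mul_swap_mul_swap hxy hxz
      have : Equiv.swap (i, j') (i, j) ∈ Gam m n := key ▸ mul_mem (mul_mem h1 h2) h1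
      rwa [Equiv.swap_comm] at this

lemma colSwap_aux (j : Fin n) : ∀ d (i i' : Fin m), (i : ℕ) + d = (i' : ℕ) → 0 < d →
    Equiv.swap (i, j) (i', j) ∈ Gam m n := by
  intro d
  induction d with
  | zero => omega
  | succ d ih =>
    intro i i' hd _
    rcases Nat.eq_zero_or_pos d with rfl | hdpos
    · exact adjV_mem j (by omega)
    · have hi'0 : 0 < (i' : ℕ) := by omega
      set im : Fin m := ⟨(i' : ℕ) - 1, by omega⟩ with him
      have h1 : Equiv.swap (im, j) (i', j) ∈ Gam m n := adjV_mem j (by simp [him]; omega)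
      have h2 : Equiv.swap (i, j) (im, j) ∈ Gam m n := ih i im (by simp [him]; omega) hdpos
      have hxy : (i, j) ≠ (im, j) := by
        intro hc
        have := congrArg (fun q : Pos m n => (q.1 : ℕ)) hc
        simp [him] at this
        omega
      have hxz : (i, j) ≠ (i', j) := by
        intro hc
        have := congrArg (fun q : Pos m n => (q.1 : ℕ)) hc
        simp at this
        omega
      have key := Equiv.swap_mul_swap_mul_swap hxy hxz
      have : Equiv.swap (i', j) (i, j) ∈ Gam m n := key ▸ mul_mem (mul_mem h1 h2) h1
      rwa [Equiv.swap_comm] at this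

lemma rowSwap_mem (i : Fin m) {j j' : Fin n} (h : j ≠ j') :
    Equiv.swap (i, j) (i, j') ∈ Gam m n := by
  rcases lt_or_gt_of_ne (fun hc => h (Fin.ext hc) : (j : ℕ) ≠ (j' : ℕ)) with hlt | hgt
  · exact rowSwap_aux i ((j' : ℕ) - (j : ℕ)) j j' (by omega) (by omega)
  · have := rowSwap_aux i ((j : ℕ) - (j' : ℕ)) j' j (by omega) (by omega)
    rwa [Equiv.swap_comm] at this

lemma colSwap_mem {i i' : Fin m} (j : Fin n) (h : i ≠ i') :
    Equiv.swap (i, j) (i', j) ∈ Gam m n := by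
  rcases lt_or_gt_of_ne (fun hc => h (Fin.ext hc) : (i : ℕ) ≠ (i' : ℕ)) with hlt | hgt
  · exact colSwap_aux j ((i' : ℕ) - (i : ℕ)) i i' (by omega) (by omega)
  · have := colSwap_aux j ((i : ℕ) - (i' : ℕ)) i' i (by omega) (by omega)
    rwa [Equiv.swap_comm] at this

lemma swap_mem (a b : Pos m n) : Equiv.swap a b ∈ Gam m n := by
  obtain ⟨i, j⟩ := a
  obtain ⟨i', j'⟩ := b
  by_cases hi : i = i'
  · subst hi
    by_cases hj : j = j'
    · subst hj
      rw [Equiv.swap_self]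
      exact (Gam m n).one_mem
    · exact rowSwap_mem i hj
  · by_cases hj : j = j'
    · subst hj
      exact colSwap_mem j hi
    · set f := Equiv.swap ((i, j') : Pos m n) (i', j') with hf
      have hfa : f (i, j) = (i, j) := by
        apply Equiv.swap_apply_of_ne_of_ne
        · intro hc; exact hj (congrArg Prod.snd hc)
        · intro hc; exact hi (congrArg Prod.fst hc)
      have hfc : f (i, j') = (i', j') := Equiv.swap_apply_left _ _
      have heq : Equiv.swap ((i, j) : Pos m n) (i', j') = f * Equiv.swap (i, j) (i, j') * f⁻¹ := by
        have h0 := Equiv.swap_apply_apply f ((i, j) : Pos m n) ((i, j') : Pos m n)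
        rw [hfa, hfc] at h0
        exact h0
      rw [heq]
      exact mul_mem (mul_mem (colSwap_mem j' hi) (rowSwap_mem i hj)) (inv_mem (colSwap_mem j' hi))

lemma Gam_top : Gam m n = ⊤ := by
  rw [eq_top_iff, ← Equiv.Perm.closure_isSwap]
  rw [Subgroup.closure_le]
  rintro σ ⟨x, y, -, rfl⟩
  exact swap_mem x y

lemma exists_perm (α : Equiv.Perm (Pos m n)) :
    ∃ x ∈ Subgroup.closure (genSet m n), x.perm = α := by
  have : α ∈ Gam m n := Gam_top ▸ Subgroup.mem_top α
  obtain ⟨x, hx, hxα⟩ := Subgroup.mem_map.mp this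
  exact ⟨x, hx, hxα⟩

lemma conj_pure_mem {x : SpinElt m n} (hx : x ∈ Subgroup.closure (genSet m n))
    {v : Pos m n → ZMod 2} (hv : (⟨1, v⟩ : SpinElt m n) ∈ Subgroup.closure (genSet m n)) :
    (⟨1, fun p => v (x.perm⁻¹ p)⟩ : SpinElt m n) ∈ Subgroup.closure (genSet m n) := by
  have key : x * ⟨1, v⟩ * x⁻¹ = (⟨1, fun p => v (x.perm⁻¹ p)⟩ : SpinElt m n) := by
    refine SpinElt.ext ?_ ?_
    · show x.perm * 1 * x.perm⁻¹ = 1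
      group
    · funext p
      show (x.flip p + v (x.perm⁻¹ p)) + x.flip (x.perm ((x.perm * 1)⁻¹ p)) = v (x.perm⁻¹ p)
      rw [mul_one]
      rw [show x.perm (x.perm⁻¹ p) = p from Equiv.apply_symm_apply _ _]
      rw [add_right_comm]
      rw [CharTwo.add_self_eq_zero, zero_add]
  rw [← key]
  exact mul_mem (mul_mem hx hv) (inv_mem hx)

/-- The pure flip supported on the top-left 2×2 block lies in the closure. -/
lemma chi_mem (hm : 2 ≤ m) (hn : 2 ≤ n) :
    (⟨1, fun p => if p.1.val ≤ 1 ∧ p.2.val ≤ 1 then 1 else 0⟩ : SpinElt m n)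
      ∈ Subgroup.closure (genSet m n) := by
  have h1m : 1 < m := by omega
  have h1n : 1 < n := by omega
  obtain ⟨z0, hz0⟩ : ∃ z : Fin m, (z : ℕ) = 0 := ⟨⟨0, by omega⟩, rfl⟩
  obtain ⟨z1, hz1⟩ : ∃ z : Fin m, (z : ℕ) = 1 := ⟨⟨1, h1m⟩, rfl⟩
  obtain ⟨w0, hw0⟩ : ∃ w : Fin n, (w : ℕ) = 0 := ⟨⟨0, by omega⟩, rfl⟩
  obtain ⟨w1, hw1⟩ : ∃ w : Fin n, (w : ℕ) = 1 := ⟨⟨1, h1n⟩, rfl⟩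
  set RA : Rect m n := ⟨0, 0, 1, 1, by omega, by omega, h1m, h1n⟩ with hRA
  set RB1 : Rect m n := ⟨0, 0, 0, 1, le_rfl, by omega, by omega, h1n⟩ with hRB1
  set RB2 : Rect m n := ⟨1, 0, 1, 1, le_rfl, by omega, h1m, h1n⟩ with hRB2
  set RC1 : Rect m n := ⟨0, 0, 1, 0, by omega, le_rfl, h1m, by omega⟩ with hRC1
  set RC2 : Rect m n := ⟨0, 1, 1, 1, by omega, le_rfl, h1m, h1n⟩ with hRC2
  have mA_00 : RA.Mem (z0, w0) := by
    show (0 : ℕ) ≤ (z0 : ℕ) ∧ (z0 : ℕ) ≤ 1 ∧ (0 : ℕ) ≤ (w0 : ℕ) ∧ (w0 : ℕ) ≤ 1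
    omega
  have mA_01 : RA.Mem (z0, w1) := by
    show (0 : ℕ) ≤ (z0 : ℕ) ∧ (z0 : ℕ) ≤ 1 ∧ (0 : ℕ) ≤ (w1 : ℕ) ∧ (w1 : ℕ) ≤ 1
    omega
  have mA_10 : RA.Mem (z1, w0) := by
    show (0 : ℕ) ≤ (z1 : ℕ) ∧ (z1 : ℕ) ≤ 1 ∧ (0 : ℕ) ≤ (w0 : ℕ) ∧ (w0 : ℕ) ≤ 1
    omega
  have mA_11 : RA.Mem (z1, w1) := by
    show (0 : ℕ) ≤ (z1 : ℕ) ∧ (z1 : ℕ) ≤ 1 ∧ (0 : ℕ) ≤ (w1 : ℕ) ∧ (w1 : ℕ) ≤ 1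
    omega
  have mB1_00 : RB1.Mem (z0, w0) := by
    show (0 : ℕ) ≤ (z0 : ℕ) ∧ (z0 : ℕ) ≤ 0 ∧ (0 : ℕ) ≤ (w0 : ℕ) ∧ (w0 : ℕ) ≤ 1
    omega
  have mB1_01 : RB1.Mem (z0, w1) := by
    show (0 : ℕ) ≤ (z0 : ℕ) ∧ (z0 : ℕ) ≤ 0 ∧ (0 : ℕ) ≤ (w1 : ℕ) ∧ (w1 : ℕ) ≤ 1
    omega
  have nB1_10 : ¬ RB1.Mem (z1, w0) := by
    intro hmem
    have h : (0 : ℕ) ≤ (z1 : ℕ) ∧ (z1 : ℕ) ≤ 0 ∧ (0 : ℕ) ≤ (w0 : ℕ) ∧ (w0 : ℕ) ≤ 1 := hmem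
    omega
  have nB1_11 : ¬ RB1.Mem (z1, w1) := by
    intro hmem
    have h : (0 : ℕ) ≤ (z1 : ℕ) ∧ (z1 : ℕ) ≤ 0 ∧ (0 : ℕ) ≤ (w1 : ℕ) ∧ (w1 : ℕ) ≤ 1 := hmem
    omega
  have nB2_00 : ¬ RB2.Mem (z0, w0) := by
    intro hmem
    have h : (1 : ℕ) ≤ (z0 : ℕ) ∧ (z0 : ℕ) ≤ 1 ∧ (0 : ℕ) ≤ (w0 : ℕ) ∧ (w0 : ℕ) ≤ 1 := hmem
    omega
  have nB2_01 : ¬ RB2.Mem (z0, w1) := by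
    intro hmem
    have h : (1 : ℕ) ≤ (z0 : ℕ) ∧ (z0 : ℕ) ≤ 1 ∧ (0 : ℕ) ≤ (w1 : ℕ) ∧ (w1 : ℕ) ≤ 1 := hmem
    omega
  have mB2_10 : RB2.Mem (z1, w0) := by
    show (1 : ℕ) ≤ (z1 : ℕ) ∧ (z1 : ℕ) ≤ 1 ∧ (0 : ℕ) ≤ (w0 : ℕ) ∧ (w0 : ℕ) ≤ 1
    omega
  have mB2_11 : RB2.Mem (z1, w1) := by
    show (1 : ℕ) ≤ (z1 : ℕ) ∧ (z1 : ℕ) ≤ 1 ∧ (0 : ℕ) ≤ (w1 : ℕ) ∧ (w1 : ℕ) ≤ 1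
    omega
  have mC1_00 : RC1.Mem (z0, w0) := by
    show (0 : ℕ) ≤ (z0 : ℕ) ∧ (z0 : ℕ) ≤ 1 ∧ (0 : ℕ) ≤ (w0 : ℕ) ∧ (w0 : ℕ) ≤ 0
    omega
  have nC1_01 : ¬ RC1.Mem (z0, w1) := by
    intro hmem
    have h : (0 : ℕ) ≤ (z0 : ℕ) ∧ (z0 : ℕ) ≤ 1 ∧ (0 : ℕ) ≤ (w1 : ℕ) ∧ (w1 : ℕ) ≤ 0 := hmem
    omega
  have mC1_10 : RC1.Mem (z1, w0) := by
    show (0 : ℕ) ≤ (z1 : ℕ) ∧ (z1 : ℕ) ≤ 1 ∧ (0 : ℕ) ≤ (w0 : ℕ) ∧ (w0 : ℕ) ≤ 0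
    omega
  have nC1_11 : ¬ RC1.Mem (z1, w1) := by
    intro hmem
    have h : (0 : ℕ) ≤ (z1 : ℕ) ∧ (z1 : ℕ) ≤ 1 ∧ (0 : ℕ) ≤ (w1 : ℕ) ∧ (w1 : ℕ) ≤ 0 := hmem
    omega
  have nC2_00 : ¬ RC2.Mem (z0, w0) := by
    intro hmem
    have h : (0 : ℕ) ≤ (z0 : ℕ) ∧ (z0 : ℕ) ≤ 1 ∧ (1 : ℕ) ≤ (w0 : ℕ) ∧ (w0 : ℕ) ≤ 1 := hmem
    omega
  have mC2_01 : RC2.Mem (z0, w1) := by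
    show (0 : ℕ) ≤ (z0 : ℕ) ∧ (z0 : ℕ) ≤ 1 ∧ (1 : ℕ) ≤ (w1 : ℕ) ∧ (w1 : ℕ) ≤ 1
    omega
  have nC2_10 : ¬ RC2.Mem (z1, w0) := by
    intro hmem
    have h : (0 : ℕ) ≤ (z1 : ℕ) ∧ (z1 : ℕ) ≤ 1 ∧ (1 : ℕ) ≤ (w0 : ℕ) ∧ (w0 : ℕ) ≤ 1 := hmem
    omega
  have mC2_11 : RC2.Mem (z1, w1) := by
    show (0 : ℕ) ≤ (z1 : ℕ) ∧ (z1 : ℕ) ≤ 1 ∧ (1 : ℕ) ≤ (w1 : ℕ) ∧ (w1 : ℕ) ≤ 1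
    omega
  have rA_00 : RA.rotFun (z0, w0) = (z1, w1) := by
    refine Prod.ext (Fin.ext ?_) (Fin.ext ?_)
    · rw [RA.rotFun_fst _ mA_00]; show (0 : ℕ) + 1 - (z0 : ℕ) = (z1 : ℕ); omega
    · rw [RA.rotFun_snd _ mA_00]; show (0 : ℕ) + 1 - (w0 : ℕ) = (w1 : ℕ); omega
  have rA_01 : RA.rotFun (z0, w1) = (z1, w0) := by
    refine Prod.ext (Fin.ext ?_) (Fin.ext ?_)
    · rw [RA.rotFun_fst _ mA_01]; show (0 : ℕ) + 1 - (z0 : ℕ) = (z1 : ℕ); omega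
    · rw [RA.rotFun_snd _ mA_01]; show (0 : ℕ) + 1 - (w1 : ℕ) = (w0 : ℕ); omega
  have rA_10 : RA.rotFun (z1, w0) = (z0, w1) := by
    refine Prod.ext (Fin.ext ?_) (Fin.ext ?_)
    · rw [RA.rotFun_fst _ mA_10]; show (0 : ℕ) + 1 - (z1 : ℕ) = (z0 : ℕ); omega
    · rw [RA.rotFun_snd _ mA_10]; show (0 : ℕ) + 1 - (w0 : ℕ) = (w1 : ℕ); omega
  have rA_11 : RA.rotFun (z1, w1) = (z0, w0) := by
    refine Prod.ext (Fin.ext ?_) (Fin.ext ?_)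
    · rw [RA.rotFun_fst _ mA_11]; show (0 : ℕ) + 1 - (z1 : ℕ) = (z0 : ℕ); omega
    · rw [RA.rotFun_snd _ mA_11]; show (0 : ℕ) + 1 - (w1 : ℕ) = (w0 : ℕ); omega
  have rB1_00 : RB1.rotFun (z0, w0) = (z0, w1) := by
    refine Prod.ext (Fin.ext ?_) (Fin.ext ?_)
    · rw [RB1.rotFun_fst _ mB1_00]; show (0 : ℕ) + 0 - (z0 : ℕ) = (z0 : ℕ); omega
    · rw [RB1.rotFun_snd _ mB1_00]; show (0 : ℕ) + 1 - (w0 : ℕ) = (w1 : ℕ); omega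
  have rB1_01 : RB1.rotFun (z0, w1) = (z0, w0) := by
    refine Prod.ext (Fin.ext ?_) (Fin.ext ?_)
    · rw [RB1.rotFun_fst _ mB1_01]; show (0 : ℕ) + 0 - (z0 : ℕ) = (z0 : ℕ); omega
    · rw [RB1.rotFun_snd _ mB1_01]; show (0 : ℕ) + 1 - (w1 : ℕ) = (w0 : ℕ); omega
  have rB1_10 : RB1.rotFun (z1, w0) = (z1, w0) := RB1.rotFun_of_not_mem _ nB1_10
  have rB1_11 : RB1.rotFun (z1, w1) = (z1, w1) := RB1.rotFun_of_not_mem _ nB1_11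
  have rB2_00 : RB2.rotFun (z0, w0) = (z0, w0) := RB2.rotFun_of_not_mem _ nB2_00
  have rB2_01 : RB2.rotFun (z0, w1) = (z0, w1) := RB2.rotFun_of_not_mem _ nB2_01
  have rB2_10 : RB2.rotFun (z1, w0) = (z1, w1) := by
    refine Prod.ext (Fin.ext ?_) (Fin.ext ?_)
    · rw [RB2.rotFun_fst _ mB2_10]; show (1 : ℕ) + 1 - (z1 : ℕ) = (z1 : ℕ); omega
    · rw [RB2.rotFun_snd _ mB2_10]; show (0 : ℕ) + 1 - (w0 : ℕ) = (w1 : ℕ); omega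
  have rB2_11 : RB2.rotFun (z1, w1) = (z1, w0) := by
    refine Prod.ext (Fin.ext ?_) (Fin.ext ?_)
    · rw [RB2.rotFun_fst _ mB2_11]; show (1 : ℕ) + 1 - (z1 : ℕ) = (z1 : ℕ); omega
    · rw [RB2.rotFun_snd _ mB2_11]; show (0 : ℕ) + 1 - (w1 : ℕ) = (w0 : ℕ); omega
  have rC1_00 : RC1.rotFun (z0, w0) = (z1, w0) := by
    refine Prod.ext (Fin.ext ?_) (Fin.ext ?_)
    · rw [RC1.rotFun_fst _ mC1_00]; show (0 : ℕ) + 1 - (z0 : ℕ) = (z1 : ℕ); omega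
    · rw [RC1.rotFun_snd _ mC1_00]; show (0 : ℕ) + 0 - (w0 : ℕ) = (w0 : ℕ); omega
  have rC1_01 : RC1.rotFun (z0, w1) = (z0, w1) := RC1.rotFun_of_not_mem _ nC1_01
  have rC1_10 : RC1.rotFun (z1, w0) = (z0, w0) := by
    refine Prod.ext (Fin.ext ?_) (Fin.ext ?_)
    · rw [RC1.rotFun_fst _ mC1_10]; show (0 : ℕ) + 1 - (z1 : ℕ) = (z0 : ℕ); omega
    · rw [RC1.rotFun_snd _ mC1_10]; show (0 : ℕ) + 0 - (w0 : ℕ) = (w0 : ℕ); omega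
  have rC1_11 : RC1.rotFun (z1, w1) = (z1, w1) := RC1.rotFun_of_not_mem _ nC1_11
  have rC2_00 : RC2.rotFun (z0, w0) = (z0, w0) := RC2.rotFun_of_not_mem _ nC2_00
  have rC2_01 : RC2.rotFun (z0, w1) = (z1, w1) := by
    refine Prod.ext (Fin.ext ?_) (Fin.ext ?_)
    · rw [RC2.rotFun_fst _ mC2_01]; show (0 : ℕ) + 1 - (z0 : ℕ) = (z1 : ℕ); omega
    · rw [RC2.rotFun_snd _ mC2_01]; show (1 : ℕ) + 1 - (w1 : ℕ) = (w1 : ℕ); omega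
  have rC2_10 : RC2.rotFun (z1, w0) = (z1, w0) := RC2.rotFun_of_not_mem _ nC2_10
  have rC2_11 : RC2.rotFun (z1, w1) = (z0, w1) := by
    refine Prod.ext (Fin.ext ?_) (Fin.ext ?_)
    · rw [RC2.rotFun_fst _ mC2_11]; show (0 : ℕ) + 1 - (z1 : ℕ) = (z0 : ℕ); omega
    · rw [RC2.rotFun_snd _ mC2_11]; show (1 : ℕ) + 1 - (w1 : ℕ) = (w1 : ℕ); omega
  have key : RA.spin * RB1.spin * RB2.spin * RC1.spin * RC2.spin =
      (⟨1, fun p => if p.1.val ≤ 1 ∧ p.2.val ≤ 1 then 1 else 0⟩ : SpinElt m n) := by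
    refine SpinElt.ext ?_ ?_
    · apply Equiv.ext
      intro p
      simp only [SpinElt.perm_mul, SpinElt.flip_mul, SpinElt.perm_mk, SpinElt.flip_mk,
        Rect.perm_spin, Rect.flip_spin, mul_inv_rev, Rect.spinPerm_inv, Equiv.Perm.mul_apply,
        Rect.spinPerm_apply, Equiv.Perm.one_apply]
      show RA.rotFun (RB1.rotFun (RB2.rotFun (RC1.rotFun (RC2.rotFun p)))) = p
      by_cases hin : p.1.val ≤ 1 ∧ p.2.val ≤ 1
      · have h1 : p.1 = z0 ∨ p.1 = z1 := by
          rcases Nat.le_one_iff_eq_zero_or_eq_one.mp hin.1 with h | h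
          · exact Or.inl (Fin.ext (by omega))
          · exact Or.inr (Fin.ext (by omega))
        have h2 : p.2 = w0 ∨ p.2 = w1 := by
          rcases Nat.le_one_iff_eq_zero_or_eq_one.mp hin.2 with h | h
          · exact Or.inl (Fin.ext (by omega))
          · exact Or.inr (Fin.ext (by omega))
        rcases h1 with h1 | h1 <;> rcases h2 with h2 | h2
        · rw [show p = (z0, w0) from Prod.ext h1 h2, rC2_00, rC1_00, rB2_10, rB1_11, rA_11]
        · rw [show p = (z0, w1) from Prod.ext h1 h2, rC2_01, rC1_11, rB2_11, rB1_10, rA_10]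
        · rw [show p = (z1, w0) from Prod.ext h1 h2, rC2_10, rC1_10, rB2_00, rB1_00, rA_01]
        · rw [show p = (z1, w1) from Prod.ext h1 h2, rC2_11, rC1_01, rB2_01, rB1_01, rA_00]
      · have rA_p : RA.rotFun p = p := RA.rotFun_of_not_mem p (fun hh => by
          have u1 : (p.1 : ℕ) ≤ 1 := hh.2.1
          have u2 : (p.2 : ℕ) ≤ 1 := hh.2.2.2
          exact hin ⟨u1, u2⟩)
        have rB1_p : RB1.rotFun p = p := RB1.rotFun_of_not_mem p (fun hh => by
          have u1 : (p.1 : ℕ) ≤ 0 := hh.2.1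
          have u2 : (p.2 : ℕ) ≤ 1 := hh.2.2.2
          exact hin ⟨by omega, u2⟩)
        have rB2_p : RB2.rotFun p = p := RB2.rotFun_of_not_mem p (fun hh => by
          have u1 : (p.1 : ℕ) ≤ 1 := hh.2.1
          have u2 : (p.2 : ℕ) ≤ 1 := hh.2.2.2
          exact hin ⟨u1, u2⟩)
        have rC1_p : RC1.rotFun p = p := RC1.rotFun_of_not_mem p (fun hh => by
          have u1 : (p.1 : ℕ) ≤ 1 := hh.2.1
          have u2 : (p.2 : ℕ) ≤ 0 := hh.2.2.2
          exact hin ⟨u1, by omega⟩)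
        have rC2_p : RC2.rotFun p = p := RC2.rotFun_of_not_mem p (fun hh => by
          have u1 : (p.1 : ℕ) ≤ 1 := hh.2.1
          have u2 : (p.2 : ℕ) ≤ 1 := hh.2.2.2
          exact hin ⟨u1, u2⟩)
        rw [rC2_p, rC1_p, rB2_p, rB1_p, rA_p]
    · funext p
      simp only [SpinElt.perm_mul, SpinElt.flip_mul, SpinElt.perm_mk, SpinElt.flip_mk,
        Rect.perm_spin, Rect.flip_spin, mul_inv_rev, Rect.spinPerm_inv, Equiv.Perm.mul_apply,
        Rect.spinPerm_apply, Equiv.Perm.one_apply]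
      show (if RA.Mem p then (1 : ZMod 2) else 0)
          + (if RB1.Mem (RA.rotFun p) then 1 else 0)
          + (if RB2.Mem (RB1.rotFun (RA.rotFun p)) then 1 else 0)
          + (if RC1.Mem (RB2.rotFun (RB1.rotFun (RA.rotFun p))) then 1 else 0)
          + (if RC2.Mem (RC1.rotFun (RB2.rotFun (RB1.rotFun (RA.rotFun p)))) then 1 else 0)
          = (if p.1.val ≤ 1 ∧ p.2.val ≤ 1 then 1 else 0)
      by_cases hin : p.1.val ≤ 1 ∧ p.2.val ≤ 1
      · have h1 : p.1 = z0 ∨ p.1 = z1 := by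
          rcases Nat.le_one_iff_eq_zero_or_eq_one.mp hin.1 with h | h
          · exact Or.inl (Fin.ext (by omega))
          · exact Or.inr (Fin.ext (by omega))
        have h2 : p.2 = w0 ∨ p.2 = w1 := by
          rcases Nat.le_one_iff_eq_zero_or_eq_one.mp hin.2 with h | h
          · exact Or.inl (Fin.ext (by omega))
          · exact Or.inr (Fin.ext (by omega))
        rcases h1 with h1 | h1 <;> rcases h2 with h2 | h2
        · rw [show p = (z0, w0) from Prod.ext h1 h2, if_pos mA_00, rA_00, if_neg nB1_11,
            rB1_11, if_pos mB2_11, rB2_11, if_pos mC1_10, rC1_10, if_neg nC2_00,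
            if_pos (show ((z0 : ℕ) ≤ 1 ∧ (w0 : ℕ) ≤ 1) by omega)]
          decide
        · rw [show p = (z0, w1) from Prod.ext h1 h2, if_pos mA_01, rA_01, if_neg nB1_10,
            rB1_10, if_pos mB2_10, rB2_10, if_neg nC1_11, rC1_11, if_pos mC2_11,
            if_pos (show ((z0 : ℕ) ≤ 1 ∧ (w1 : ℕ) ≤ 1) by omega)]
          decide
        · rw [show p = (z1, w0) from Prod.ext h1 h2, if_pos mA_10, rA_10, if_pos mB1_01,
            rB1_01, if_neg nB2_00, rB2_00, if_pos mC1_00, rC1_00, if_neg nC2_10,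
            if_pos (show ((z1 : ℕ) ≤ 1 ∧ (w0 : ℕ) ≤ 1) by omega)]
          decide
        · rw [show p = (z1, w1) from Prod.ext h1 h2, if_pos mA_11, rA_11, if_pos mB1_00,
            rB1_00, if_neg nB2_01, rB2_01, if_neg nC1_01, rC1_01, if_pos mC2_01,
            if_pos (show ((z1 : ℕ) ≤ 1 ∧ (w1 : ℕ) ≤ 1) by omega)]
          decide
      · have nA_p : ¬ RA.Mem p := fun hh => by
          have u1 : (p.1 : ℕ) ≤ 1 := hh.2.1
          have u2 : (p.2 : ℕ) ≤ 1 := hh.2.2.2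
          exact hin ⟨u1, u2⟩
        have nB1_p : ¬ RB1.Mem p := fun hh => by
          have u1 : (p.1 : ℕ) ≤ 0 := hh.2.1
          have u2 : (p.2 : ℕ) ≤ 1 := hh.2.2.2
          exact hin ⟨by omega, u2⟩
        have nB2_p : ¬ RB2.Mem p := fun hh => by
          have u1 : (p.1 : ℕ) ≤ 1 := hh.2.1
          have u2 : (p.2 : ℕ) ≤ 1 := hh.2.2.2
          exact hin ⟨u1, u2⟩
        have nC1_p : ¬ RC1.Mem p := fun hh => by
          have u1 : (p.1 : ℕ) ≤ 1 := hh.2.1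
          have u2 : (p.2 : ℕ) ≤ 0 := hh.2.2.2
          exact hin ⟨u1, by omega⟩
        have nC2_p : ¬ RC2.Mem p := fun hh => by
          have u1 : (p.1 : ℕ) ≤ 1 := hh.2.1
          have u2 : (p.2 : ℕ) ≤ 1 := hh.2.2.2
          exact hin ⟨u1, u2⟩
        have rA_p : RA.rotFun p = p := RA.rotFun_of_not_mem p nA_p
        have rB1_p : RB1.rotFun p = p := RB1.rotFun_of_not_mem p nB1_p
        rw [if_neg nA_p, rA_p, if_neg nB1_p, rB1_p, if_neg nB2_p,
          RB2.rotFun_of_not_mem p nB2_p, if_neg nC1_p, RC1.rotFun_of_not_mem p nC1_p,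
          if_neg nC2_p, if_neg hin]
        decide
  rw [← key]
  have mA : RA.spin ∈ Subgroup.closure (genSet m n) :=
    Subgroup.subset_closure ⟨RA, rfl, Or.inr (Or.inr rfl)⟩
  have mB1 : RB1.spin ∈ Subgroup.closure (genSet m n) :=
    Subgroup.subset_closure ⟨RB1, rfl, Or.inl rfl⟩
  have mB2 : RB2.spin ∈ Subgroup.closure (genSet m n) :=
    Subgroup.subset_closure ⟨RB2, rfl, Or.inl rfl⟩
  have mC1 : RC1.spin ∈ Subgroup.closure (genSet m n) :=
    Subgroup.subset_closure ⟨RC1, rfl, Or.inr (Or.inl rfl)⟩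
  have mC2 : RC2.spin ∈ Subgroup.closure (genSet m n) :=
    Subgroup.subset_closure ⟨RC2, rfl, Or.inr (Or.inl rfl)⟩
  exact mul_mem (mul_mem (mul_mem (mul_mem mA mB1) mB2) mC1) mC2

lemma pair_mem (hm : 2 ≤ m) (hn : 2 ≤ n) (hmn : 4 < m * n) (a b : Pos m n) (hab : a ≠ b) :
    (⟨1, fun p => (if p = a then 1 else 0) + (if p = b then 1 else 0)⟩ : SpinElt m n)
      ∈ Subgroup.closure (genSet m n) := by
  classical
  set p00 : Pos m n := (⟨0, by omega⟩, ⟨0, by omega⟩) with hp00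
  set p01 : Pos m n := (⟨0, by omega⟩, ⟨1, by omega⟩) with hp01
  set p10 : Pos m n := (⟨1, by omega⟩, ⟨0, by omega⟩) with hp10
  set s : Pos m n := (⟨1, by omega⟩, ⟨1, by omega⟩) with hs
  set T : Finset (Pos m n) := {p00, p01, p10, s} with hT
  have hmemT : ∀ u : Pos m n, (u.1.val ≤ 1 ∧ u.2.val ≤ 1) ↔ u ∈ T := by
    rintro ⟨⟨ua, hua⟩, ⟨ub, hub⟩⟩
    simp only [hT, hp00, hp01, hp10, hs, Finset.mem_insert, Finset.mem_singleton,
      Prod.mk.injEq, Fin.mk.injEq, Prod.ext_iff, Fin.ext_iff]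
    omega
  have hcardT : T.card ≤ 4 := by
    have e1 := Finset.card_insert_le p00 ({p01, p10, s} : Finset (Pos m n))
    have e2 := Finset.card_insert_le p01 ({p10, s} : Finset (Pos m n))
    have e3 := Finset.card_insert_le p10 ({s} : Finset (Pos m n))
    have e4 : ({s} : Finset (Pos m n)).card = 1 := Finset.card_singleton s
    show ({p00, p01, p10, s} : Finset (Pos m n)).card ≤ 4
    omega
  have htex : ∃ t : Pos m n, t ∉ T := by
    by_contra hcon
    push_neg at hcon
    have h5 : (Finset.univ : Finset (Pos m n)).card ≤ T.card :=
      Finset.card_le_card (fun t _ => hcon t)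
    rw [Finset.card_univ, Fintype.card_prod, Fintype.card_fin, Fintype.card_fin] at h5
    omega
  obtain ⟨t, ht⟩ := htex
  have hts : t ≠ s := by
    intro hc
    exact ht (hc ▸ (by simp [hT] : s ∈ T))
  have hχt : ¬ (t.1.val ≤ 1 ∧ t.2.val ≤ 1) := fun hc => ht ((hmemT t).mp hc)
  have hχs : (s.1.val ≤ 1 ∧ s.2.val ≤ 1) := by simp [hs]
  have hχ := chi_mem (m := m) (n := n) hm hn
  -- conjugate by swap s t to get the pure flip on {p00, p01, p10, t}
  obtain ⟨x, hxH, hxp⟩ := exists_perm (m := m) (n := n) (Equiv.swap s t)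
  have hconj := conj_pure_mem hxH hχ
  rw [hxp, Equiv.swap_inv] at hconj
  -- multiply to get the pure flip on {s, t}
  have hst : (⟨1, fun p => (if p = s then 1 else 0) + (if p = t then 1 else 0)⟩ : SpinElt m n)
      ∈ Subgroup.closure (genSet m n) := by
    have hmul := mul_mem hχ hconj
    have heq : (⟨1, fun p => if p.1.val ≤ 1 ∧ p.2.val ≤ 1 then 1 else 0⟩ : SpinElt m n) *
        ⟨1, fun p => if ((Equiv.swap s t) p).1.val ≤ 1 ∧ ((Equiv.swap s t) p).2.val ≤ 1
          then 1 else 0⟩ =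
        ⟨1, fun p => (if p = s then 1 else 0) + (if p = t then 1 else 0)⟩ := by
      refine SpinElt.ext (one_mul 1) ?_
      funext p
      show (if p.1.val ≤ 1 ∧ p.2.val ≤ 1 then (1 : ZMod 2) else 0) +
          (if ((Equiv.swap s t) ((1 : Equiv.Perm (Pos m n))⁻¹ p)).1.val ≤ 1 ∧
            ((Equiv.swap s t) ((1 : Equiv.Perm (Pos m n))⁻¹ p)).2.val ≤ 1 then 1 else 0)
          = (if p = s then (1 : ZMod 2) else 0) + (if p = t then 1 else 0)
      rw [inv_one]
      rw [show (1 : Equiv.Perm (Pos m n)) p = p from rfl]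
      by_cases hps : p = s
      · subst hps
        rw [Equiv.swap_apply_left]
        rw [if_pos hχs, if_neg hχt, if_pos rfl, if_neg (Ne.symm hts)]
      · by_cases hpt : p = t
        · subst hpt
          rw [Equiv.swap_apply_right]
          rw [if_neg hχt, if_pos hχs, if_neg hts, if_pos rfl]
        · rw [Equiv.swap_apply_of_ne_of_ne hps hpt, if_neg hps, if_neg hpt, add_zero,
            CharTwo.add_self_eq_zero]
    rwa [heq] at hmul
  -- now move {s, t} to {a, b}
  set t' : Pos m n := (Equiv.swap s a) t with ht'
  have ht'a : t' ≠ a := by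
    intro hc
    rw [ht'] at hc
    have := (Equiv.injective (Equiv.swap s a)) (hc.trans (Equiv.swap_apply_left s a).symm)
    exact hts this
  set γ : Equiv.Perm (Pos m n) := Equiv.swap t' b * Equiv.swap s a with hγ
  have hγs : γ s = a := by
    rw [hγ]
    show (Equiv.swap t' b) ((Equiv.swap s a) s) = a
    rw [Equiv.swap_apply_left]
    exact Equiv.swap_apply_of_ne_of_ne (fun hc => ht'a hc.symm) hab
  have hγt : γ t = b := by
    rw [hγ]
    show (Equiv.swap t' b) ((Equiv.swap s a) t) = b
    rw [← ht', Equiv.swap_apply_left]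
  obtain ⟨y, hyH, hyp⟩ := exists_perm (m := m) (n := n) γ
  have hconj2 := conj_pure_mem hyH hst
  rw [hyp] at hconj2
  have heq2 : (⟨1, fun p => (if γ⁻¹ p = s then (1 : ZMod 2) else 0) +
      (if γ⁻¹ p = t then 1 else 0)⟩ : SpinElt m n) =
      ⟨1, fun p => (if p = a then 1 else 0) + (if p = b then 1 else 0)⟩ := by
    refine SpinElt.ext rfl ?_
    funext p
    simp only [Equiv.Perm.inv_eq_iff_eq, hγs, hγt]
  rwa [heq2] at hconj2

lemma pure_even_mem (hm : 2 ≤ m) (hn : 2 ≤ n) (hmn : 4 < m * n) :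
    ∀ (N : ℕ) (v : Pos m n → ZMod 2),
      (Finset.univ.filter fun p => v p = 1).card ≤ N → (∑ p, v p) = 0 →
      (⟨1, v⟩ : SpinElt m n) ∈ Subgroup.closure (genSet m n) := by
  intro N
  induction N with
  | zero =>
    intro v hc _
    have hv : ∀ p, v p = 0 := by
      intro p
      have hempty : (Finset.univ.filter fun p => v p = 1) = ∅ :=
        Finset.card_eq_zero.mp (Nat.le_zero.mp hc)
      have : p ∉ (Finset.univ.filter fun p => v p = 1) := hempty ▸ Finset.notMem_empty p
      rcases (show ∀ z : ZMod 2, z = 0 ∨ z = 1 by decide) (v p) with h | h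
      · exact h
      · exact absurd (Finset.mem_filter.mpr ⟨Finset.mem_univ p, h⟩) this
    have : (⟨1, v⟩ : SpinElt m n) = 1 := SpinElt.ext rfl (funext fun p => hv p)
    rw [this]
    exact Subgroup.one_mem _
  | succ N ih =>
    intro v hc hs
    rcases Finset.eq_empty_or_nonempty (Finset.univ.filter fun p => v p = 1) with hE | hNE
    · have hv : ∀ p, v p = 0 := by
        intro p
        have : p ∉ (Finset.univ.filter fun p => v p = 1) := hE ▸ Finset.notMem_empty p
        rcases (show ∀ z : ZMod 2, z = 0 ∨ z = 1 by decide) (v p) with h | h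
        · exact h
        · exact absurd (Finset.mem_filter.mpr ⟨Finset.mem_univ p, h⟩) this
      have : (⟨1, v⟩ : SpinElt m n) = 1 := SpinElt.ext rfl (funext fun p => hv p)
      rw [this]
      exact Subgroup.one_mem _
    · obtain ⟨a, ha⟩ := hNE
      have hva : v a = 1 := (Finset.mem_filter.mp ha).2
      have hcard2 : 1 < (Finset.univ.filter fun p => v p = 1).card := by
        have hdvd : (2 : ℕ) ∣ (Finset.univ.filter fun p => v p = 1).card := by
          rw [← ZMod.natCast_eq_zero_iff, ← sum_eq_card]
          exact hs
        have hpos : 0 < (Finset.univ.filter fun p => v p = 1).card :=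
          Finset.card_pos.mpr ⟨a, ha⟩
        omega
      obtain ⟨b, hb, hba⟩ := Finset.exists_mem_ne hcard2 a
      have hvb : v b = 1 := (Finset.mem_filter.mp hb).2
      set v' : Pos m n → ZMod 2 :=
        fun p => v p + (if p = a then 1 else 0) + (if p = b then 1 else 0) with hv'
      have hanb : a ≠ b := fun hc => hba hc.symm
      have hfilter : (Finset.univ.filter fun p => v' p = 1) =
          (Finset.univ.filter fun p => v p = 1) \ {a, b} := by
        ext p
        simp only [Finset.mem_filter, Finset.mem_univ, true_and, Finset.mem_sdiff,
          Finset.mem_insert, Finset.mem_singleton]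
        by_cases hpa : p = a
        · subst hpa
          have hva' : v' p = 0 := by
            simp only [hv', hva, if_pos rfl, if_neg hanb]
            decide
          rw [hva']
          constructor
          · intro hcon; exact absurd hcon (by decide)
          · rintro ⟨-, hcon⟩; exact absurd (Or.inl rfl) hcon
        · by_cases hpb : p = b
          · subst hpb
            have hvb' : v' p = 0 := by
              simp only [hv', hvb, if_neg hpa, if_pos rfl]
              decide
            rw [hvb']
            constructor
            · intro hcon; exact absurd hcon (by decide)
            · rintro ⟨-, hcon⟩; exact absurd (Or.inr rfl) hcon
          · have hvp : v' p = v p := by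
              simp only [hv', if_neg hpa, if_neg hpb, add_zero]
            rw [hvp]
            constructor
            · intro h; exact ⟨h, fun hc => hc.elim hpa hpb⟩
            · intro h; exact h.1
      have hsub : ({a, b} : Finset (Pos m n)) ⊆ (Finset.univ.filter fun p => v p = 1) := by
        intro p hp
        rcases Finset.mem_insert.mp hp with rfl | hp
        · exact ha
        · exact (Finset.mem_singleton.mp hp) ▸ hb
      have hcab : ({a, b} : Finset (Pos m n)).card = 2 := by
        rw [Finset.card_insert_of_notMem (Finset.notMem_singleton.mpr hanb),
          Finset.card_singleton]
      have hc' : (Finset.univ.filter fun p => v' p = 1).card ≤ N := by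
        rw [hfilter, Finset.card_sdiff_of_subset hsub, hcab]
        omega
      have hs' : (∑ p, v' p) = 0 := by
        simp only [hv']
        rw [Finset.sum_add_distrib, Finset.sum_add_distrib, hs]
        rw [Finset.sum_ite_eq' Finset.univ a (fun _ => (1 : ZMod 2)),
          Finset.sum_ite_eq' Finset.univ b (fun _ => (1 : ZMod 2))]
        simp only [Finset.mem_univ, if_pos]
        decide
      have h1 := ih v' hc' hs'
      have h2 := pair_mem hm hn hmn a b hanb
      have key : (⟨1, v'⟩ : SpinElt m n) *
          ⟨1, fun p => (if p = a then 1 else 0) + (if p = b then 1 else 0)⟩ =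
          ⟨1, v⟩ := by
        refine SpinElt.ext (one_mul 1) ?_
        funext p
        show v' p + ((if ((1 : Equiv.Perm (Pos m n))⁻¹ p) = a then (1 : ZMod 2) else 0) +
          (if ((1 : Equiv.Perm (Pos m n))⁻¹ p) = b then 1 else 0)) = v p
        rw [inv_one, show (1 : Equiv.Perm (Pos m n)) p = p from rfl]
        simp only [hv']
        have : ∀ x y z : ZMod 2, x + y + z + (y + z) = x := by decide
        exact this (v p) _ _
      rw [← key]
      exact mul_mem h1 h2

/-- The subgroup of elements with even total flip. -/
def evenSG (m n : ℕ) : Subgroup (SpinElt m n) where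
  carrier := {x | Phi x = 0}
  one_mem' := by
    show Phi 1 = 0
    simp only [Phi, SpinElt.one_def]
    exact Finset.sum_const_zero
  mul_mem' := by
    intro a b ha hb
    show Phi (a * b) = 0
    rw [Phi_mul, ha, hb, add_zero]
  inv_mem' := by
    intro a ha
    show Phi a⁻¹ = 0
    rw [Phi_inv]
    exact ha

lemma closure_le_evenSG : Subgroup.closure (genSet m n) ≤ evenSG m n := by
  rw [Subgroup.closure_le]
  rintro x ⟨R, rfl, hd⟩
  show Phi R.spin = 0
  rw [Phi_eq_wt, wt_spin]
  rcases hd with h | h | h <;> rw [h] <;> decide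

end Aux

end Stmt16Aux

open Stmt16Aux

/-- For `m, n ≥ 2` with `mn > 4`, the spins of types `1×2`, `2×1` and `2×2` generate
exactly the index-2 subgroup `Spin^a_{m×n}` of elements whose orientation vector has
even Hamming weight. -/
theorem stmt16 (m n : ℕ) (hm : 2 ≤ m) (hn : 2 ≤ n) (hmn : 4 < m * n) :
    (Subgroup.closure {s : SpinElt m n | ∃ R : Rect m n, s = R.spin ∧
        (R.dims = (1, 2) ∨ R.dims = (2, 1) ∨ R.dims = (2, 2))} : Set (SpinElt m n))
      = {x : SpinElt m n | Even (wt x)} := by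
  apply Set.Subset.antisymm
  · intro x hx
    have hx' : x ∈ Subgroup.closure (genSet m n) := hx
    exact (even_wt_iff x).mpr (closure_le_evenSG hx')
  · intro x hx
    have hx' : Even (wt x) := hx
    show x ∈ Subgroup.closure (genSet m n)
    obtain ⟨h, hhH, hhp⟩ := exists_perm (m := m) (n := n) x.perm
    have hPhix : Phi x = 0 := (even_wt_iff x).mp hx'
    have hPhih : Phi h = 0 := closure_le_evenSG hhH
    have hsum : (∑ p, (x * h⁻¹).flip p) = 0 := by
      have h0 : Phi (x * h⁻¹) = 0 := by rw [Phi_mul, Phi_inv, hPhix, hPhih, add_zero]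
      exact h0
    have h1 := pure_even_mem hm hn hmn _ (x * h⁻¹).flip le_rfl hsum
    have hperm1 : (x * h⁻¹).perm = 1 := by
      show x.perm * h.perm⁻¹ = 1
      simp [hhp]
    have key : x = (⟨1, (x * h⁻¹).flip⟩ : SpinElt m n) * h := by
      have e : (⟨1, (x * h⁻¹).flip⟩ : SpinElt m n) = x * h⁻¹ := SpinElt.ext hperm1.symm rfl
      rw [e, inv_mul_cancel_right]
    rw [key]
    exact mul_mem h1 hhH
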